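/- Let p > q ≥ 3 be coprime integers and let Γ be the convex hull of the set of integer points with strictly positive coordinates in the cone τ'' ⊂ ℝ² generated by (0,1) and (p,q). If (a₁,b₁) and (a₂,b₂) with a₁ ≤ a₂ are two vertices of a compact face of Γ, then 0 ≤ (b₂−b₁)/(a₂−a₁) < q/p. -/

import Mathlib

/-- If a point `(A2, r)` lies on the segment from `(A1,B1)` to `(A2,B2)` with `A1 < A2`,
then `r = B2`. -/
private lemma seg_snd {A1 B1 A2 B2 r : ℝ} (hA : A1 < A2)
    (h : ((A2, r) : ℝ × ℝ) ∈ segment ℝ (A1, B1) (A2, B2)) : r = B2 := by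
  rw [segment_eq_image] at h
  obtain ⟨θ, ⟨h0, h1⟩, heq⟩ := h
  simp only [Prod.smul_mk, Prod.mk_add_mk, Prod.mk.injEq, smul_eq_mul] at heq
  obtain ⟨hf, hs⟩ := heq
  have hz : (1 - θ) * (A2 - A1) = 0 := by linear_combination -hf
  rcases mul_eq_zero.1 hz with hz1 | hz2
  · have hθ : θ = 1 := by linarith
    rw [hθ] at hs
    linarith
  · linarith

/-- First coordinate of a point of the segment is at most `A2` when `A1 ≤ A2`. -/
private lemma seg_fst_le {A1 B1 A2 B2 c r : ℝ} (hA : A1 ≤ A2)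
    (h : ((c, r) : ℝ × ℝ) ∈ segment ℝ (A1, B1) (A2, B2)) : c ≤ A2 := by
  rw [segment_eq_image] at h
  obtain ⟨θ, ⟨h0, h1⟩, heq⟩ := h
  simp only [Prod.smul_mk, Prod.mk_add_mk, Prod.mk.injEq, smul_eq_mul] at heq
  obtain ⟨hf, -⟩ := heq
  nlinarith [mul_nonneg (by linarith : (0:ℝ) ≤ 1 - θ) (by linarith : (0:ℝ) ≤ A2 - A1)]

set_option maxHeartbeats 1000000 in
/-- Slope bound for compact faces of the convex hull Γ of the positive integer points of
the cone generated by (0,1) and (p,q): if (a₁,b₁), (a₂,b₂) with a₁ ≤ a₂ are the vertices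
of a compact face of Γ (i.e. the segment joining them is an extreme subset of Γ), then
0 ≤ (b₂−b₁)/(a₂−a₁) < q/p. -/
theorem stmt_3 (p q : ℤ) (hq : 3 ≤ q) (hpq : q < p) (hcop : IsCoprime p q)
    (Γ : Set (ℝ × ℝ))
    (hΓ : Γ = convexHull ℝ {x : ℝ × ℝ | ∃ a b : ℤ, 0 < a ∧ 0 < b ∧
      x = ((a : ℝ), (b : ℝ)) ∧ ∃ lam mu : ℝ, 0 ≤ lam ∧ 0 ≤ mu ∧
        (a : ℝ) = mu * p ∧ (b : ℝ) = lam + mu * q})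
    (a₁ b₁ a₂ b₂ : ℤ) (hle : a₁ ≤ a₂)
    (hne : ((a₁ : ℝ), (b₁ : ℝ)) ≠ ((a₂ : ℝ), (b₂ : ℝ)))
    (hface : IsExtreme ℝ Γ (segment ℝ ((a₁ : ℝ), (b₁ : ℝ)) ((a₂ : ℝ), (b₂ : ℝ)))) :
    0 ≤ ((b₂ : ℝ) - b₁) / ((a₂ : ℝ) - a₁) ∧
      ((b₂ : ℝ) - b₁) / ((a₂ : ℝ) - a₁) < (q : ℝ) / p := by
  have hp0 : (0:ℤ) < p := by linarith
  have hq0 : (0:ℤ) < q := by linarith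
  have hpR : (0:ℝ) < (p:ℝ) := by exact_mod_cast hp0
  have hqR : (0:ℝ) < (q:ℝ) := by exact_mod_cast hq0
  -- membership of lattice points of the cone in Γ
  have hmemΓ : ∀ a b : ℤ, 0 < a → 0 < b → q * a ≤ p * b → ((a:ℝ),(b:ℝ)) ∈ Γ := by
    intro a b ha hb hab
    rw [hΓ]
    apply subset_convexHull
    refine ⟨a, b, ha, hb, rfl, (b:ℝ) - a * q / p, (a:ℝ)/p, ?_, ?_, ?_, ?_⟩
    · rw [sub_nonneg, div_le_iff₀ hpR]
      have hab' : (q:ℝ) * a ≤ (p:ℝ) * b := by exact_mod_cast hab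
      nlinarith
    · positivity
    · field_simp
    · field_simp
      ring
  -- Γ is contained in the obvious closed convex region
  have hΓsub : Γ ⊆ {x : ℝ × ℝ | 1 ≤ x.1 ∧ 1 ≤ x.2 ∧ (q:ℝ) * x.1 ≤ (p:ℝ) * x.2} := by
    rw [hΓ]
    apply convexHull_min
    · rintro x ⟨a, b, ha, hb, rfl, lam, mu, hlam, hmu, hA, hB⟩
      refine ⟨?_, ?_, ?_⟩
      · have h1 : (1:ℤ) ≤ a := ha
        simpa using (show (1:ℝ) ≤ (a:ℝ) by exact_mod_cast h1)
      · have h1 : (1:ℤ) ≤ b := hb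
        simpa using (show (1:ℝ) ≤ (b:ℝ) by exact_mod_cast h1)
      · simp only
        rw [hA, hB]
        nlinarith [mul_nonneg hpR.le hlam]
    · intro x hx y hy t s ht hs hts
      obtain ⟨hx1, hx2, hx3⟩ := hx
      obtain ⟨hy1, hy2, hy3⟩ := hy
      refine ⟨?_, ?_, ?_⟩
      · simp only [Prod.fst_add, Prod.smul_fst, smul_eq_mul]
        nlinarith [mul_le_mul_of_nonneg_left hx1 ht, mul_le_mul_of_nonneg_left hy1 hs]
      · simp only [Prod.snd_add, Prod.smul_snd, smul_eq_mul]
        nlinarith [mul_le_mul_of_nonneg_left hx2 ht, mul_le_mul_of_nonneg_left hy2 hs]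
      · simp only [Prod.fst_add, Prod.snd_add, Prod.smul_fst, Prod.smul_snd, smul_eq_mul]
        nlinarith [mul_le_mul_of_nonneg_left hx3 ht, mul_le_mul_of_nonneg_left hy3 hs]
  have hx1Γ : ((a₁:ℝ), (b₁:ℝ)) ∈ Γ := hface.1 (left_mem_segment ℝ _ _)
  have hx2Γ : ((a₂:ℝ), (b₂:ℝ)) ∈ Γ := hface.1 (right_mem_segment ℝ _ _)
  obtain ⟨ha1R, hb1R, hc1R⟩ := hΓsub hx1Γ
  obtain ⟨ha2R, hb2R, hc2R⟩ := hΓsub hx2Γ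
  simp only at ha1R hb1R hc1R ha2R hb2R hc2R
  have ha1 : (1:ℤ) ≤ a₁ := by exact_mod_cast ha1R
  have hb1 : (1:ℤ) ≤ b₁ := by exact_mod_cast hb1R
  have ha2 : (1:ℤ) ≤ a₂ := by exact_mod_cast ha2R
  have hb2 : (1:ℤ) ≤ b₂ := by exact_mod_cast hb2R
  have hc1 : q * a₁ ≤ p * b₁ := by exact_mod_cast hc1R
  have hc2 : q * a₂ ≤ p * b₂ := by exact_mod_cast hc2R
  rcases eq_or_lt_of_le hle with heq | hlt
  · -- degenerate vertical case: slope is 0/0 = 0 in Lean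
    rw [heq, sub_self, div_zero]
    exact ⟨le_rfl, div_pos hqR hpR⟩
  have haR : (a₁:ℝ) < (a₂:ℝ) := by exact_mod_cast hlt
  have hd : (0:ℝ) < (a₂:ℝ) - a₁ := by linarith
  -- Claim 1: b₁ ≤ b₂
  have hb12 : b₁ ≤ b₂ := by
    by_contra hcon
    push_neg at hcon
    have hbR : (b₂:ℝ) < (b₁:ℝ) := by exact_mod_cast hcon
    have huΓ : ((a₂:ℝ), (b₁:ℝ)) ∈ Γ :=
      hmemΓ a₂ b₁ (by linarith) (by linarith) (by nlinarith)
    have hvΓ : ((a₁:ℝ), (b₂:ℝ)) ∈ Γ :=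
      hmemΓ a₁ b₂ (by linarith) (by linarith) (by nlinarith)
    have hmseg : ((((a₁:ℝ) + a₂)/2, ((b₁:ℝ) + b₂)/2) : ℝ × ℝ) ∈
        segment ℝ ((a₁:ℝ), (b₁:ℝ)) ((a₂:ℝ), (b₂:ℝ)) := by
      refine ⟨1/2, 1/2, by norm_num, by norm_num, by norm_num, ?_⟩
      simp only [Prod.smul_mk, Prod.mk_add_mk, Prod.mk.injEq, smul_eq_mul]
      constructor <;> ring
    have hmopen : ((((a₁:ℝ) + a₂)/2, ((b₁:ℝ) + b₂)/2) : ℝ × ℝ) ∈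
        openSegment ℝ ((a₂:ℝ), (b₁:ℝ)) ((a₁:ℝ), (b₂:ℝ)) := by
      refine ⟨1/2, 1/2, by norm_num, by norm_num, by norm_num, ?_⟩
      simp only [Prod.smul_mk, Prod.mk_add_mk, Prod.mk.injEq, smul_eq_mul]
      constructor <;> ring
    have huseg := hface.2 huΓ hvΓ hmseg hmopen
    have := seg_snd haR huseg
    linarith
  -- Claim 2: p*(b₂-b₁) < q*(a₂-a₁)
  have hkey : p * (b₂ - b₁) < q * (a₂ - a₁) := by
    by_contra hcon
    push_neg at hcon
    have hwΓ : (((a₂:ℝ) + p, (b₂:ℝ) + q) : ℝ × ℝ) ∈ Γ := by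
      have := hmemΓ (a₂ + p) (b₂ + q) (by linarith) (by linarith) (by nlinarith)
      push_cast at this
      exact this
    set θ : ℝ := ((a₂:ℝ) - a₁) / ((a₂:ℝ) - a₁ + p) with hθdef
    have hdP : (0:ℝ) < (a₂:ℝ) - a₁ + p := by linarith
    have hθpos : 0 < θ := div_pos hd hdP
    have hθlt : θ < 1 := (div_lt_one hdP).2 (by linarith)
    rcases eq_or_lt_of_le hcon with heqc | hltc
    · -- equality case: x₂ lies strictly inside segment x₁ w
      have heqR : (q:ℝ) * ((a₂:ℝ) - a₁) = (p:ℝ) * ((b₂:ℝ) - b₁) := by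
        exact_mod_cast heqc
      have hopen : (((a₂:ℝ), (b₂:ℝ)) : ℝ × ℝ) ∈
          openSegment ℝ ((a₁:ℝ), (b₁:ℝ)) ((a₂:ℝ) + p, (b₂:ℝ) + q) := by
        refine ⟨1 - θ, θ, by linarith, hθpos, by ring, ?_⟩
        simp only [Prod.smul_mk, Prod.mk_add_mk, Prod.mk.injEq, smul_eq_mul]
        constructor
        · rw [hθdef]
          field_simp
          ring
        · rw [hθdef]
          field_simp
          linear_combination heqR
      have hwseg := hface.right_mem_of_mem_openSegment hx1Γ hwΓ (right_mem_segment ℝ _ _) hopen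
      have := seg_fst_le haR.le hwseg
      linarith
    · -- strict case
      have hltR : (q:ℝ) * ((a₂:ℝ) - a₁) < (p:ℝ) * ((b₂:ℝ) - b₁) := by
        exact_mod_cast hltc
      set y : ℝ := (1 - θ) * b₁ + θ * ((b₂:ℝ) + q) with hydef
      have huseg : (((a₂:ℝ), y) : ℝ × ℝ) ∈
          segment ℝ ((a₁:ℝ), (b₁:ℝ)) ((a₂:ℝ) + p, (b₂:ℝ) + q) := by
        refine ⟨1 - θ, θ, by linarith, hθpos.le, by ring, ?_⟩
        simp only [Prod.smul_mk, Prod.mk_add_mk, Prod.mk.injEq, smul_eq_mul]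
        refine ⟨?_, ?_⟩
        · rw [hθdef]
          field_simp
          ring
        · trivial
      have hconv : Convex ℝ Γ := hΓ ▸ convex_convexHull ℝ _
      have huΓ : (((a₂:ℝ), y) : ℝ × ℝ) ∈ Γ :=
        hconv.segment_subset hx1Γ hwΓ huseg
      have hy_lt : y < (b₂:ℝ) := by
        have hyval : y = ((p:ℝ) * b₁ + ((a₂:ℝ) - a₁) * ((b₂:ℝ) + q)) / ((a₂:ℝ) - a₁ + p) := by
          rw [hydef, hθdef]
          field_simp
          ring
        rw [hyval, div_lt_iff₀ hdP]
        linarith [hltR]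
      have hvΓ : (((a₂:ℝ), (b₂:ℝ) + 1) : ℝ × ℝ) ∈ Γ := by
        have := hmemΓ a₂ (b₂ + 1) (by linarith) (by linarith) (by nlinarith)
        push_cast at this
        exact this
      have hopen2 : (((a₂:ℝ), (b₂:ℝ)) : ℝ × ℝ) ∈
          openSegment ℝ ((a₂:ℝ), y) ((a₂:ℝ), (b₂:ℝ) + 1) := by
        set s : ℝ := ((b₂:ℝ) - y) / ((b₂:ℝ) + 1 - y) with hsdef
        have hden : (0:ℝ) < (b₂:ℝ) + 1 - y := by linarith
        have hspos : 0 < s := div_pos (by linarith) hden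
        have hslt : s < 1 := (div_lt_one hden).2 (by linarith)
        refine ⟨1 - s, s, by linarith, hspos, by ring, ?_⟩
        simp only [Prod.smul_mk, Prod.mk_add_mk, Prod.mk.injEq, smul_eq_mul]
        have hseq : s * ((b₂:ℝ) + 1 - y) = (b₂:ℝ) - y := by
          rw [hsdef]
          field_simp
        exact ⟨by ring, by linear_combination hseq⟩
      have hvseg := hface.right_mem_of_mem_openSegment huΓ hvΓ (right_mem_segment ℝ _ _) hopen2
      have := seg_snd haR hvseg
      linarith
  -- conclude
  have hbR : (b₁:ℝ) ≤ (b₂:ℝ) := by exact_mod_cast hb12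
  have hkeyR : (p:ℝ) * ((b₂:ℝ) - b₁) < (q:ℝ) * ((a₂:ℝ) - a₁) := by exact_mod_cast hkey
  constructor
  · apply div_nonneg <;> linarith
  · rw [div_lt_div_iff₀ hd hpR]
    linarith [hkeyR]
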